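/- arXiv:2207.06685 — 2 statements merged into one kernel-verified Lean document; each statement's English description precedes it below -/
import Mathlib

section
/- For the λ-biased random walk on the d-regular tree, the first-return generating function satisfies U(z) = [(d-1+λ) - √((d-1+λ)^2 - 4λ(d-1)z^2)] / (2(d-1)) for all real z with |z| ≤ (d-1+λ)/(2√(λ(d-1))). -/
open Finset Filter Real Topology


/-- The k-th Catalan number as a real number. -/
noncomputable def catR (k : ℕ) : ℝ := (Nat.choose (2 * k) k : ℝ) / (k + 1)

lemma catR_eq (n : ℕ) : catR n = (catalan n : ℝ) := by
  have h := succ_mul_catalan_eq_centralBinom n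
  have h' : ((n : ℝ) + 1) * (catalan n : ℝ) = (Nat.choose (2 * n) n : ℝ) := by
    exact_mod_cast congrArg (Nat.cast : ℕ → ℝ) h
  have hn : ((n : ℝ) + 1) ≠ 0 := by positivity
  rw [catR, ← h']
  field_simp

lemma cb_sq_le (n : ℕ) : (2 * n + 1) * (Nat.centralBinom n) ^ 2 ≤ 16 ^ n := by
  induction n with
  | zero => simp [Nat.centralBinom]
  | succ n ih =>
    have key := Nat.succ_mul_centralBinom_succ n
    have h1 : (n + 1) ^ 2 * ((2 * (n + 1) + 1) * Nat.centralBinom (n + 1) ^ 2)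
        = (2 * n + 3) * (2 * (2 * n + 1)) ^ 2 * Nat.centralBinom n ^ 2 := by
      have : ((n + 1) * Nat.centralBinom (n + 1)) ^ 2
          = (2 * (2 * n + 1) * Nat.centralBinom n) ^ 2 := by rw [key]
      ring_nf
      ring_nf at this
      nlinarith [this]
    have h2 : (2 * n + 3) * (2 * (2 * n + 1)) ^ 2 * Nat.centralBinom n ^ 2
        ≤ (n + 1) ^ 2 * (16 ^ (n + 1)) := by
      calc (2 * n + 3) * (2 * (2 * n + 1)) ^ 2 * Nat.centralBinom n ^ 2
          = (4 * (2 * n + 3) * (2 * n + 1)) * ((2 * n + 1) * Nat.centralBinom n ^ 2) := by ring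
        _ ≤ (4 * (2 * n + 3) * (2 * n + 1)) * 16 ^ n := Nat.mul_le_mul_left _ ih
        _ ≤ (16 * (n + 1) ^ 2) * 16 ^ n := Nat.mul_le_mul_right _ (by nlinarith)
        _ = (n + 1) ^ 2 * 16 ^ (n + 1) := by ring
    have := h1 ▸ h2
    exact Nat.le_of_mul_le_mul_left this (by positivity)

noncomputable def bseq (n : ℕ) : ℝ := (Nat.centralBinom n : ℝ) / (2 * 4 ^ n)

lemma bseq_tendsto : Tendsto bseq atTop (𝓝 0) := by
  have hb0 : ∀ n, 0 ≤ bseq n := fun n => by unfold bseq; positivity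
  have hsqle : ∀ n : ℕ, bseq n ^ 2 ≤ 1 / (2 * (n : ℝ) + 1) := by
    intro n
    have hR : (2 * (n : ℝ) + 1) * (Nat.centralBinom n : ℝ) ^ 2 ≤ 16 ^ n := by
      exact_mod_cast cb_sq_le n
    have hpos : (0 : ℝ) < 2 * (n : ℝ) + 1 := by positivity
    rw [le_div_iff₀ hpos]
    rw [bseq, div_pow, div_mul_eq_mul_div, div_le_one (by positivity)]
    have h16 : ((2 : ℝ) * 4 ^ n) ^ 2 = 4 * 16 ^ n := by
      rw [mul_pow, ← pow_mul, mul_comm n 2, pow_mul]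
      norm_num
    rw [h16]
    nlinarith [hR, pow_pos (show (0:ℝ) < 16 by norm_num) n]
  have h1 : Tendsto (fun n : ℕ => 2 * (n : ℝ) + 1) atTop atTop :=
    tendsto_atTop_mono (fun n => by
      have : (0:ℝ) ≤ (n:ℝ) := Nat.cast_nonneg n
      linarith) tendsto_natCast_atTop_atTop
  have h2 : Tendsto (fun n : ℕ => 1 / (2 * (n : ℝ) + 1)) atTop (𝓝 0) := by
    simp only [one_div]
    exact h1.inv_tendsto_atTop
  have hsq : Tendsto (fun n => bseq n ^ 2) atTop (𝓝 0) :=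
    squeeze_zero (fun n => by positivity) hsqle h2
  have := (Real.continuous_sqrt.tendsto 0).comp hsq
  simp only [Function.comp_def] at this
  have heq : (fun n => Real.sqrt (bseq n ^ 2)) = bseq := by
    funext n; exact Real.sqrt_sq (hb0 n)
  rwa [heq, Real.sqrt_zero] at this

lemma tele (n : ℕ) : (catalan n : ℝ) * (1/4 : ℝ) ^ (n + 1) = bseq n - bseq (n + 1) := by
  have hc : ((n : ℝ) + 1) * (catalan n : ℝ) = (Nat.centralBinom n : ℝ) := by
    exact_mod_cast congrArg (Nat.cast : ℕ → ℝ) (succ_mul_catalan_eq_centralBinom n)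
  have hB : ((n : ℝ) + 1) * (Nat.centralBinom (n + 1) : ℝ)
      = 2 * (2 * (n : ℝ) + 1) * (Nat.centralBinom n : ℝ) := by
    exact_mod_cast congrArg (Nat.cast : ℕ → ℝ) (Nat.succ_mul_centralBinom_succ n)
  have hn : ((n : ℝ) + 1) ≠ 0 := by positivity
  have hc' : (catalan n : ℝ) = (Nat.centralBinom n : ℝ) / ((n : ℝ) + 1) := by
    rw [eq_div_iff hn]; linarith [hc]
  have hB' : (Nat.centralBinom (n + 1) : ℝ)
      = 2 * (2 * (n : ℝ) + 1) * (Nat.centralBinom n : ℝ) / ((n : ℝ) + 1) := by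
    rw [eq_div_iff hn]; linarith [hB]
  rw [bseq, bseq, hc', hB', pow_succ, pow_succ]
  have h4 : (4 : ℝ) ^ n ≠ 0 := by positivity
  field_simp
  have h14 : (1/4:ℝ) ^ n * 4 ^ n = 1 := by rw [← mul_pow]; norm_num
  linear_combination ((Nat.centralBinom n : ℝ) * 2) * h14

lemma hasSum_quarter : HasSum (fun n => (catalan n : ℝ) * (1/4 : ℝ) ^ (n + 1)) (1/2) := by
  rw [hasSum_iff_tendsto_nat_of_nonneg (fun n => by positivity)]
  have hps : ∀ N, ∑ i ∈ range N, (catalan i : ℝ) * (1/4 : ℝ) ^ (i + 1) = bseq 0 - bseq N := by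
    intro N
    rw [← Finset.sum_range_sub' bseq N]
    exact Finset.sum_congr rfl fun i _ => tele i
  simp only [hps]
  have hb0 : bseq 0 = 1/2 := by simp [bseq, Nat.centralBinom]
  rw [hb0]
  have : Tendsto (fun N => (1:ℝ)/2 - bseq N) atTop (𝓝 (1/2 - 0)) :=
    tendsto_const_nhds.sub bseq_tendsto
  simpa using this

lemma catalan_hasSum {x : ℝ} (hx0 : 0 ≤ x) (hx : x ≤ 1/4) :
    HasSum (fun n => (catalan n : ℝ) * x ^ (n + 1)) ((1 - Real.sqrt (1 - 4 * x)) / 2) := by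
  set a : ℕ → ℝ := fun n => (catalan n : ℝ) * x ^ (n + 1) with ha
  have hbound : ∀ n, a n ≤ (catalan n : ℝ) * (1/4 : ℝ) ^ (n + 1) := fun n =>
    mul_le_mul_of_nonneg_left (pow_le_pow_left₀ hx0 hx (n + 1)) (Nat.cast_nonneg _)
  have hanonneg : ∀ n, 0 ≤ a n := fun n => by simp only [ha]; positivity
  have hsum : Summable a :=
    Summable.of_nonneg_of_le hanonneg hbound hasSum_quarter.summable
  set T := ∑' n, a n with hTdef
  have hT : HasSum a T := hsum.hasSum
  have hTle : T ≤ 1/2 := by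
    have := Summable.tsum_le_tsum hbound hsum hasSum_quarter.summable
    rwa [hasSum_quarter.tsum_eq] at this
  have hnorm : Summable fun n => ‖a n‖ := by
    refine hsum.congr fun n => ?_
    rw [Real.norm_eq_abs, abs_of_nonneg (hanonneg n)]
  have hmul : T * T = ∑' n, ∑ kl ∈ antidiagonal n, a kl.1 * a kl.2 :=
    tsum_mul_tsum_eq_tsum_sum_antidiagonal_of_summable_norm hnorm hnorm
  have hinner : ∀ n, ∑ kl ∈ antidiagonal n, a kl.1 * a kl.2 = a (n + 1) := by
    intro n
    have hterm : ∀ kl ∈ antidiagonal n, a kl.1 * a kl.2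
        = ((catalan kl.1 : ℝ) * (catalan kl.2 : ℝ)) * x ^ (n + 2) := by
      intro kl hkl
      have hkl' : kl.1 + kl.2 = n := Finset.HasAntidiagonal.mem_antidiagonal.mp hkl
      simp only [ha]
      rw [← hkl']
      ring
    rw [Finset.sum_congr rfl hterm, ← Finset.sum_mul]
    have hcat : ∑ kl ∈ antidiagonal n, (catalan kl.1 : ℝ) * (catalan kl.2 : ℝ)
        = (catalan (n + 1) : ℝ) := by
      rw [catalan_succ' n]
      push_cast
      rfl
    rw [hcat]
  have hshift : HasSum (fun n => a (n + 1)) (T - x) := by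
    have h := (hasSum_nat_add_iff' (f := a) 1).mpr hT
    have h0 : ∑ i ∈ range 1, a i = x := by simp [ha]
    rwa [h0] at h
  have hTT : T * T = T - x := by
    rw [hmul, tsum_congr hinner, hshift.tsum_eq]
  have hnn : 0 ≤ 1 - 2 * T := by linarith
  have hsq : (1 - 2 * T) ^ 2 = 1 - 4 * x := by nlinarith [hTT]
  have hsqrt : Real.sqrt (1 - 4 * x) = 1 - 2 * T := by
    rw [← hsq, Real.sqrt_sq hnn]
  have hval : (1 - Real.sqrt (1 - 4 * x)) / 2 = T := by
    rw [hsqrt]; ring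
  rwa [hval]

/-- The first-return generating function `U(z) = ∑_{n≥1} f^{(2n)} z^{2n}` of the
`λ`-biased random walk on the `d`-regular tree, where
`f^{(2n)} = c_{n-1} ((d-1)/(d-1+λ))^{n-1} (λ/(d-1+λ))^n`, equals
`[(d-1+λ) - √((d-1+λ)² - 4λ(d-1)z²)]/(2(d-1))` for `|z| ≤ (d-1+λ)/(2√(λ(d-1)))`. -/
theorem firstReturn_generating_function (d : ℕ) (hd : 2 ≤ d) (lam : ℝ) (hlam : 0 < lam)
    (z : ℝ) (hz : |z| ≤ ((d : ℝ) - 1 + lam) / (2 * Real.sqrt (lam * ((d : ℝ) - 1)))) :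
    ∑' n : ℕ,
        catR n * (((d : ℝ) - 1) / ((d : ℝ) - 1 + lam)) ^ n *
          (lam / ((d : ℝ) - 1 + lam)) ^ (n + 1) * z ^ (2 * (n + 1)) =
      (((d : ℝ) - 1 + lam) -
          Real.sqrt (((d : ℝ) - 1 + lam) ^ 2 - 4 * lam * ((d : ℝ) - 1) * z ^ 2)) /
        (2 * ((d : ℝ) - 1)) := by
  have hd2 : (2 : ℝ) ≤ (d : ℝ) := by exact_mod_cast hd
  set D : ℝ := (d : ℝ) - 1 with hD
  have hD1 : (1 : ℝ) ≤ D := by rw [hD]; linarith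
  have hDpos : (0 : ℝ) < D := by linarith
  set s : ℝ := D + lam with hs
  have hspos : (0 : ℝ) < s := by rw [hs]; linarith
  set x : ℝ := lam * D * z ^ 2 / s ^ 2 with hx
  have hx0 : 0 ≤ x := by rw [hx]; positivity
  have hldpos : (0 : ℝ) < lam * D := by positivity
  have hrpos : (0 : ℝ) < Real.sqrt (lam * D) := Real.sqrt_pos.mpr hldpos
  have hzsq : 4 * (lam * D) * z ^ 2 ≤ s ^ 2 := by
    have h1 : |z| ^ 2 ≤ (s / (2 * Real.sqrt (lam * D))) ^ 2 :=
      pow_le_pow_left₀ (abs_nonneg z) hz 2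
    rw [sq_abs, div_pow, mul_pow, Real.sq_sqrt hldpos.le] at h1
    have h2 : z ^ 2 * (2 ^ 2 * (lam * D)) ≤ s ^ 2 := by
      rw [← le_div_iff₀ (by positivity)]
      exact h1
    nlinarith [h2]
  have hx4 : x ≤ 1 / 4 := by
    rw [hx, div_le_div_iff₀ (by positivity) (by norm_num)]
    nlinarith [hzsq]
  have hkey := (catalan_hasSum hx0 hx4).mul_left (s / D)
  have hfun : (fun n : ℕ => catR n * (D / s) ^ n * (lam / s) ^ (n + 1) * z ^ (2 * (n + 1)))
      = fun n : ℕ => s / D * ((catalan n : ℝ) * x ^ (n + 1)) := by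
    funext n
    have hsne : s ≠ 0 := hspos.ne'
    have hDne : D ≠ 0 := hDpos.ne'
    have hxeq : x = lam / s * (D / s) * z ^ 2 := by
      rw [hx, div_mul_div_comm, div_mul_eq_mul_div, show s * s = s ^ 2 from (sq s).symm]
    rw [catR_eq, hxeq, pow_mul, mul_pow, mul_pow, pow_succ (D / s) n]
    have h1 : s / D * (D / s) = 1 := by field_simp
    linear_combination (-((catalan n : ℝ) * (lam / s) ^ (n + 1) * (D / s) ^ n *
      (z ^ 2) ^ (n + 1))) * h1
  rw [hfun, hkey.tsum_eq]
  have hsq : s ^ 2 - 4 * lam * D * z ^ 2 = s ^ 2 * (1 - 4 * x) := by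
    rw [hx]
    field_simp
  rw [hsq, Real.sqrt_mul (by positivity) _, Real.sqrt_sq hspos.le]
  have h14 : 0 ≤ 1 - 4 * x := by linarith
  field_simp
end

section
/- With Φ(t) = [-ab + √(a^2 + ρ^2(1-b^2)t^2)]/(1-b^2) where a = 2(d-1)/(d-1+λ), b = (d-1-λ)/(d-1+λ), ρ = 2√(λ(d-1))/(d-1+λ), and 0 < λ < d-1, the Green function G(z) = a/(b + √(1-ρ^2z^2)) satisfies the functional equation G(z) = Φ(z·G(z)) for all |z| ≤ 1/ρ. -/
/-- With `a = 2(d-1)/(d-1+λ)`, `b = (d-1-λ)/(d-1+λ)`, `ρ = 2√(λ(d-1))/(d-1+λ)` and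
`Φ(t) = [-ab + √(a² + ρ²(1-b²)t²)]/(1-b²)`, the Green function
`G(z) = a/(b + √(1-ρ²z²))` satisfies `G(z) = Φ(z·G(z))` for all `|z| ≤ 1/ρ`,
whenever `0 < λ < d-1` and `d ≥ 2`. -/
theorem green_functional_equation (d : ℕ) (hd : 2 ≤ d) (lam : ℝ) (hlam : 0 < lam)
    (hlam' : lam < (d : ℝ) - 1) (z : ℝ)
    (a b ρ : ℝ) (ha : a = 2 * ((d : ℝ) - 1) / ((d : ℝ) - 1 + lam))
    (hb : b = ((d : ℝ) - 1 - lam) / ((d : ℝ) - 1 + lam))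
    (hρ : ρ = 2 * Real.sqrt (lam * ((d : ℝ) - 1)) / ((d : ℝ) - 1 + lam))
    (G Φ : ℝ → ℝ)
    (hG : ∀ w, G w = a / (b + Real.sqrt (1 - ρ ^ 2 * w ^ 2)))
    (hΦ : ∀ t, Φ t = (-(a * b) + Real.sqrt (a ^ 2 + ρ ^ 2 * (1 - b ^ 2) * t ^ 2)) / (1 - b ^ 2))
    (hz : |z| ≤ 1 / ρ) :
    G z = Φ (z * G z) := by
  have hd1 : (1:ℝ) ≤ (d:ℝ) - 1 := by
    have : (2:ℝ) ≤ (d:ℝ) := by exact_mod_cast hd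
    linarith
  have hD : (0:ℝ) < (d : ℝ) - 1 + lam := by linarith
  have ha0 : 0 < a := by rw [ha]; positivity
  have hb0 : 0 < b := by
    rw [hb]; apply div_pos; linarith; exact hD
  have hb1 : b < 1 := by
    rw [hb, div_lt_one hD]; linarith
  have hρ0 : 0 < ρ := by
    rw [hρ]
    apply div_pos _ hD
    have : 0 < Real.sqrt (lam * ((d : ℝ) - 1)) := Real.sqrt_pos.mpr (by nlinarith)
    linarith
  have hz2 : ρ ^ 2 * z ^ 2 ≤ 1 := by
    have h1 : z ^ 2 ≤ (1 / ρ) ^ 2 := by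
      rw [← sq_abs z]
      exact pow_le_pow_left₀ (abs_nonneg z) hz 2
    have := mul_le_mul_of_nonneg_left h1 (le_of_lt (pow_pos hρ0 2))
    calc ρ ^ 2 * z ^ 2 ≤ ρ ^ 2 * (1 / ρ) ^ 2 := this
      _ = 1 := by field_simp
  set s := Real.sqrt (1 - ρ ^ 2 * z ^ 2) with hs_def
  have hs0 : 0 ≤ s := Real.sqrt_nonneg _
  have hs2 : s ^ 2 = 1 - ρ ^ 2 * z ^ 2 := Real.sq_sqrt (by linarith)
  have hbs : 0 < b + s := by linarith
  have h1bs : 0 < 1 + b * s := by positivity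
  rw [hG, hΦ, ← hs_def]
  have key : a ^ 2 + ρ ^ 2 * (1 - b ^ 2) * (z * (a / (b + s))) ^ 2
      = (a * (1 + b * s) / (b + s)) ^ 2 := by
    have hρz : ρ ^ 2 * z ^ 2 = 1 - s ^ 2 := by linarith
    field_simp
    linear_combination (1 - b ^ 2) * hρz
  rw [key, Real.sqrt_sq (by positivity)]
  have h1b2 : (1:ℝ) - b ^ 2 ≠ 0 := by nlinarith
  field_simp
  ring
end
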